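/- Let x⃗ = Σ_{i=1}^t l_i·x⃗_i with integers 0 ≤ l_i ≤ p_i − 1 and x⃗ ≤ δ⃗, and set I = {i : l_i ≤ p_i − 2}. If z⃗ ∈ L satisfies z⃗ ≥ 0 and z⃗ ≰ x⃗, then there exists an index i_0 ∈ I such that z⃗ − (1 + l_{i_0})·x⃗_{i_0} ≥ 0. -/

import Mathlib

open scoped BigOperators

namespace WPL

/-- The rank-one abelian group `L(p₁,…,p_t)`: the quotient of `ℤ^t` by the
subgroup generated by the elements `p 0 • e 0 - p i • e i`. -/
def rel (t : ℕ) [NeZero t] (p : Fin t → ℕ) : Submodule ℤ (Fin t → ℤ) :=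
  Submodule.span ℤ
    { v | ∃ i : Fin t, v = (p 0 : ℤ) • Pi.single (0 : Fin t) (1 : ℤ) - (p i : ℤ) • Pi.single i (1 : ℤ) }

/-- The group `L(p₁,…,p_t)`. -/
abbrev L (t : ℕ) [NeZero t] (p : Fin t → ℕ) : Type :=
  (Fin t → ℤ) ⧸ rel t p

/-- The generator `x⃗ᵢ` of `L`. -/
def xg (t : ℕ) [NeZero t] (p : Fin t → ℕ) (i : Fin t) : L t p :=
  Submodule.Quotient.mk (Pi.single i (1 : ℤ))

/-- The canonical element `c⃗ = p₁ • x⃗₁`. -/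
noncomputable def cg (t : ℕ) [NeZero t] (p : Fin t → ℕ) : L t p :=
  (p 0 : ℤ) • xg t p 0

/-- `y ∈ L_+`, i.e. `y ≥ 0`: `y` is an ℕ-linear combination of the `x⃗ᵢ`. -/
def pos (t : ℕ) [NeZero t] (p : Fin t → ℕ) (y : L t p) : Prop :=
  ∃ a : Fin t → ℕ, y = ∑ i, (a i : ℤ) • xg t p i

/-- The dualizing element `w⃗ = (t-2) • c⃗ - ∑ x⃗ᵢ`. -/
noncomputable def wg (t : ℕ) [NeZero t] (p : Fin t → ℕ) : L t p :=
  ((t : ℤ) - 2) • cg t p - ∑ i, xg t p i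

/-- The dominant element `δ⃗ = c⃗ + 2 • w⃗`. -/
noncomputable def dg (t : ℕ) [NeZero t] (p : Fin t → ℕ) : L t p :=
  cg t p + 2 • wg t p

set_option linter.unusedSectionVars false

section Aux
variable (t : ℕ) [NeZero t] (p : Fin t → ℕ)

lemma pc (i : Fin t) : (p i : ℤ) • xg t p i = cg t p := by
  unfold cg xg
  rw [← Submodule.Quotient.mk_smul, ← Submodule.Quotient.mk_smul, Submodule.Quotient.eq]
  have : ((p i : ℤ) • Pi.single i (1:ℤ) - (p 0 : ℤ) • Pi.single (0:Fin t) (1:ℤ) : Fin t → ℤ)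
      = -((p 0 : ℤ) • Pi.single (0:Fin t) (1:ℤ) - (p i : ℤ) • Pi.single i (1:ℤ)) := by abel
  rw [this]
  exact neg_mem (Submodule.subset_span ⟨i, rfl⟩)

def q (i : Fin t) : ℤ := ∏ j ∈ Finset.univ.erase i, (p j : ℤ)

lemma pq (i : Fin t) : (p i : ℤ) * q t p i = ∏ j, (p j : ℤ) := by
  exact Finset.mul_prod_erase Finset.univ (fun j => (p j : ℤ)) (Finset.mem_univ i)

lemma q_pos (hp : ∀ i, 2 ≤ p i) (i : Fin t) : 0 < q t p i := by
  apply Finset.prod_pos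
  intro j _
  exact_mod_cast Nat.lt_of_lt_of_le Nat.zero_lt_two (hp j)

def F : (Fin t → ℤ) →ₗ[ℤ] ℤ := ∑ i, q t p i • (LinearMap.proj i)

lemma F_apply (v : Fin t → ℤ) : F t p v = ∑ i, q t p i * v i := by
  simp [F, LinearMap.sum_apply]

lemma F_single (i : Fin t) (a : ℤ) : F t p (Pi.single i a) = q t p i * a := by
  rw [F_apply]
  rw [Finset.sum_eq_single i]
  · simp
  · intro j _ hj; simp [Pi.single_apply, hj]
  · simp

lemma F_ker : rel t p ≤ LinearMap.ker (F t p) := by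
  rw [rel, Submodule.span_le]
  rintro v ⟨i, rfl⟩
  simp only [SetLike.mem_coe, LinearMap.mem_ker, map_sub, map_smul, F_single, smul_eq_mul]
  rw [mul_one, mul_one, pq, pq, sub_self]

noncomputable def D : L t p →ₗ[ℤ] ℤ := Submodule.liftQ _ (F t p) (F_ker t p)

lemma D_mk (v : Fin t → ℤ) : D t p (Submodule.Quotient.mk v) = F t p v := rfl

lemma D_x (i : Fin t) : D t p (xg t p i) = q t p i := by
  rw [xg, D_mk, F_single, mul_one]

lemma D_c : D t p (cg t p) = ∏ j, (p j : ℤ) := by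
  rw [cg, map_smul, D_x, smul_eq_mul, pq]


def G (i : Fin t) : (Fin t → ℤ) →ₗ[ℤ] ZMod (p i) :=
  (Int.castAddHom (ZMod (p i))).toIntLinearMap ∘ₗ (LinearMap.proj i)

lemma G_apply (i : Fin t) (v : Fin t → ℤ) : G t p i v = ((v i : ℤ) : ZMod (p i)) := rfl

lemma G_ker (i : Fin t) : rel t p ≤ LinearMap.ker (G t p i) := by
  rw [rel, Submodule.span_le]
  rintro v ⟨j, rfl⟩
  simp only [SetLike.mem_coe, LinearMap.mem_ker, map_sub, map_smul, G_apply]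
  by_cases h0 : i = 0
  · by_cases hj : i = j
    · subst h0 hj; simp [Pi.single_apply, zsmul_eq_mul, ZMod.natCast_self]
    · subst h0; simp [Pi.single_apply, Ne.symm hj, zsmul_eq_mul, ZMod.natCast_self]
  · by_cases hj : i = j
    · subst hj; simp [Pi.single_apply, h0, zsmul_eq_mul, ZMod.natCast_self]
    · simp [Pi.single_apply, h0, Ne.symm hj, zsmul_eq_mul]


noncomputable def R (i : Fin t) : L t p →ₗ[ℤ] ZMod (p i) :=
  Submodule.liftQ _ (G t p i) (G_ker t p i)

lemma R_mk (i : Fin t) (v : Fin t → ℤ) :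
    R t p i (Submodule.Quotient.mk v) = ((v i : ℤ) : ZMod (p i)) := rfl

lemma R_x (i j : Fin t) : R t p i (xg t p j) = if i = j then 1 else 0 := by
  rw [xg, R_mk, Pi.single_apply]
  split <;> simp

lemma R_c (i : Fin t) : R t p i (cg t p) = 0 := by
  rw [cg, map_smul, R_x]
  by_cases h : i = 0
  · subst h; simp [zsmul_eq_mul, ZMod.natCast_self]
  · simp [h]

/-- anything of the form `n • c + ∑ bᵢ • xᵢ` with nonnegative coefficients is in `L₊`. -/
lemma pos_of' (n : ℤ) (b : Fin t → ℤ) (hn : 0 ≤ n) (hb : ∀ i, 0 ≤ b i)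
    (y : L t p) (hy : y = n • cg t p + ∑ i, b i • xg t p i) : pos t p y := by
  refine ⟨fun i => (b i + if i = 0 then n * p 0 else 0).toNat, ?_⟩
  have key : ∀ i, ((b i + if i = 0 then n * p 0 else 0).toNat : ℤ)
      = b i + if i = 0 then n * p 0 else 0 := by
    intro i
    apply Int.toNat_of_nonneg
    have : (0:ℤ) ≤ if i = 0 then n * p 0 else 0 := by
      split
      · exact mul_nonneg hn (by positivity)
      · exact le_rfl
    linarith [hb i]
  show y = ∑ i, (((b i + if i = 0 then n * p 0 else 0).toNat : ℕ) : ℤ) • xg t p i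
  calc y = n • cg t p + ∑ i, b i • xg t p i := hy
    _ = ∑ i, ((b i + if i = 0 then n * p 0 else 0)) • xg t p i := by
        rw [Finset.sum_congr rfl (fun i _ => add_smul (b i) _ (xg t p i)),
          Finset.sum_add_distrib]
        have hs : ∑ i, (if i = 0 then n * (p 0:ℤ) else 0) • xg t p i
            = (n * p 0) • xg t p 0 := by
          rw [Finset.sum_eq_single (0 : Fin t)]
          · simp
          · intro j _ hj; simp [hj]
          · simp
        rw [hs, cg, smul_smul, add_comm]
    _ = ∑ i, (((b i + if i = 0 then n * p 0 else 0).toNat : ℤ)) • xg t p i := by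
        exact Finset.sum_congr rfl (fun i _ => by rw [key i])


lemma decomp (a : Fin t → ℕ) :
    ∑ i, (a i : ℤ) • xg t p i
      = ((∑ i, a i / p i : ℕ) : ℤ) • cg t p + ∑ i, ((a i % p i : ℕ) : ℤ) • xg t p i := by
  have hterm : ∀ i, (a i : ℤ) • xg t p i
      = ((a i / p i : ℕ) : ℤ) • cg t p + ((a i % p i : ℕ) : ℤ) • xg t p i := by
    intro i
    rw [← pc t p i, smul_smul]
    rw [← add_smul]
    congr 1
    push_cast
    rw [mul_comm]
    exact (Int.mul_ediv_add_emod _ _).symm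
  rw [Finset.sum_congr rfl (fun i _ => hterm i), Finset.sum_add_distrib, ← Finset.sum_smul]
  push_cast
  rfl


lemma sum_p_smul : ∑ i, (p i : ℤ) • xg t p i = (t : ℤ) • cg t p := by
  rw [Finset.sum_congr rfl (fun i _ => pc t p i), Finset.sum_const, Finset.card_univ,
    Fintype.card_fin, natCast_zsmul]

lemma I_nonempty (ht : 3 ≤ t) (hp : ∀ i, 2 ≤ p i) (l : Fin t → ℤ)
    (hl : ∀ i, 0 ≤ l i ∧ l i ≤ (p i : ℤ) - 1)
    (hxd : pos t p (dg t p - ∑ i, l i • xg t p i)) :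
    ∃ i, l i ≤ (p i : ℤ) - 2 := by
  by_contra hcon
  push_neg at hcon
  have hle : ∀ i, l i = (p i : ℤ) - 1 := fun i => le_antisymm (hl i).2 (by linarith [hcon i])
  have hx : ∑ i, l i • xg t p i = (t : ℤ) • cg t p - ∑ i, xg t p i := by
    have : ∀ i ∈ Finset.univ, l i • xg t p i = (p i : ℤ) • xg t p i - xg t p i := by
      intro i _; rw [hle i, sub_smul, one_smul]
    rw [Finset.sum_congr rfl this, Finset.sum_sub_distrib, sum_p_smul]
  have hdx : dg t p - ∑ i, l i • xg t p i
      = ((t : ℤ) - 3) • cg t p - ∑ i, xg t p i := by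
    rw [dg, wg, hx]
    module
  rw [hdx] at hxd
  obtain ⟨a, ha⟩ := hxd
  -- residues
  have hres : ∀ i, (p i : ℤ) - 1 ≤ (a i : ℤ) := by
    intro i
    have : NeZero (p i) := ⟨by have := hp i; omega⟩
    have h1 := congrArg (R t p i) ha
    rw [map_sub, map_smul, R_c, map_sum, map_sum] at h1
    have h2 : ∀ j ∈ Finset.univ, R t p i ((a j : ℤ) • xg t p j)
        = if i = j then ((a j : ℤ) : ZMod (p i)) else 0 := by
      intro j _
      rw [map_smul, R_x]
      split <;> simp [zsmul_eq_mul]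
    rw [Finset.sum_congr rfl h2, Finset.sum_ite_eq Finset.univ i
      (fun j => ((a j : ℤ) : ZMod (p i)))] at h1
    simp only [Finset.mem_univ, if_true, smul_zero, zero_sub] at h1
    have h3 : ∀ j ∈ Finset.univ, R t p i (xg t p j)
        = if i = j then (1 : ZMod (p i)) else 0 := fun j _ => R_x t p i j
    rw [Finset.sum_congr rfl h3, Finset.sum_ite_eq Finset.univ i (fun _ => (1 : ZMod (p i)))] at h1
    simp only [Finset.mem_univ, if_true] at h1
    -- h1 : -1 = ((a i : ℤ) : ZMod (p i))
    have h4 : (((a i + 1 : ℕ)) : ZMod (p i)) = 0 := by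
      push_cast at h1
      push_cast
      rw [← h1]
      ring
    have h5 : p i ∣ a i + 1 := (ZMod.natCast_eq_zero_iff _ _).mp h4
    have h6 : p i ≤ a i + 1 := Nat.le_of_dvd (Nat.succ_pos _) h5
    have := hp i
    push_cast
    omega
  -- degrees
  have hd := congrArg (D t p) ha
  rw [map_sub, map_smul, D_c, map_sum, map_sum] at hd
  simp only [map_smul, D_x, smul_eq_mul] at hd
  have hP : (0:ℤ) < ∏ j, (p j : ℤ) := by
    apply Finset.prod_pos
    intro j _
    exact_mod_cast Nat.lt_of_lt_of_le Nat.zero_lt_two (hp j)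
  have hbound : ∑ i, (a i : ℤ) * q t p i ≥ ∑ i, ((p i : ℤ) - 1) * q t p i := by
    apply Finset.sum_le_sum
    intro i _
    exact mul_le_mul_of_nonneg_right (hres i) (le_of_lt (q_pos t p hp i))
  have hsplit : ∑ i, ((p i : ℤ) - 1) * q t p i
      = (t : ℤ) * (∏ j, (p j : ℤ)) - ∑ i, q t p i := by
    rw [Finset.sum_congr rfl (fun i _ => by rw [sub_mul, one_mul, pq]),
      Finset.sum_sub_distrib, Finset.sum_const, Finset.card_univ, Fintype.card_fin,
      nsmul_eq_mul]
  have ht' : (3:ℤ) ≤ (t:ℤ) := by exact_mod_cast ht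
  nlinarith [hd, hbound, hsplit, hP]

/-- sum with an `if` bump at one index. -/
lemma sum_add_ite (i0 : Fin t) (r : Fin t → ℤ) (c : ℤ) :
    ∑ i, ((r i) + if i = i0 then c else 0) • xg t p i
      = (∑ i, (r i) • xg t p i) + c • xg t p i0 := by
  rw [Finset.sum_congr rfl (fun i _ => add_smul (r i) _ (xg t p i)),
    Finset.sum_add_distrib]
  congr 1
  rw [Finset.sum_eq_single i0]
  · simp
  · intro j _ hj; simp [hj]
  · simp

end Aux

end WPL

open WPL in
/-- if `z⃗ ≥ 0` and `z⃗ ≰ x⃗` then `z⃗ - (1+l_{i₀}) x⃗_{i₀} ≥ 0`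
for some `i₀ ∈ I = {i : lᵢ ≤ pᵢ - 2}`. -/
theorem exists_index_sub_pos
    (t : ℕ) [NeZero t] (ht : 3 ≤ t) (p : Fin t → ℕ) (hp : ∀ i, 2 ≤ p i)
    (l : Fin t → ℤ) (hl : ∀ i, 0 ≤ l i ∧ l i ≤ (p i : ℤ) - 1)
    (xv : L t p) (hxv : xv = ∑ i, l i • xg t p i)
    (hxd : pos t p (dg t p - xv))
    (I : Finset (Fin t)) (hI : I = Finset.univ.filter (fun i => l i ≤ (p i : ℤ) - 2))
    (z : L t p) (hz : pos t p z) (hzx : ¬ pos t p (xv - z)) :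
    ∃ i ∈ I, pos t p (z - (1 + l i) • xg t p i) := by
  obtain ⟨a, haz⟩ := hz
  set r : Fin t → ℕ := fun i => a i % p i with hr
  set M : ℕ := ∑ i, a i / p i with hM
  have hzdec : z = (M : ℤ) • cg t p + ∑ i, (r i : ℤ) • xg t p i := by
    rw [haz, decomp]
  have hrlt : ∀ i, r i < p i := fun i => Nat.mod_lt _ (by have := hp i; omega)
  have key : 1 ≤ M ∨ ∃ i, l i < (r i : ℤ) := by
    by_contra hcon
    push_neg at hcon
    obtain ⟨hM1, hrl⟩ := hcon
    have hM0 : M = 0 := by omega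
    apply hzx
    apply pos_of' t p 0 (fun i => l i - (r i : ℤ)) le_rfl
      (fun i => by linarith [hrl i])
    rw [hxv, hzdec, hM0,
      Finset.sum_congr rfl (fun i _ => sub_smul (l i) ((r i : ℤ)) (xg t p i)),
      Finset.sum_sub_distrib]
    module
  rcases key with hM1 | ⟨i0, hi0⟩
  · -- M ≥ 1 : use any index of I
    obtain ⟨i0, hIi0⟩ := I_nonempty t p ht hp l hl (by rwa [← hxv])
    refine ⟨i0, by rw [hI]; exact Finset.mem_filter.mpr ⟨Finset.mem_univ _, hIi0⟩, ?_⟩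
    apply pos_of' t p ((M : ℤ) - 1)
      (fun i => (r i : ℤ) + if i = i0 then (p i0 : ℤ) - 1 - l i0 else 0)
      (sub_nonneg.mpr (by exact_mod_cast hM1))
      (fun i => by
        have h0 : (0:ℤ) ≤ (r i : ℤ) := Int.natCast_nonneg _
        split
        · linarith [hIi0]
        · linarith)
    rw [hzdec, sum_add_ite, ← pc t p i0]
    module
  · -- some residue exceeds l
    have hmem : l i0 ≤ (p i0 : ℤ) - 2 := by
      have h1 : (r i0 : ℤ) ≤ (p i0 : ℤ) - 1 := by
        have := hrlt i0; push_cast; omega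
      linarith
    refine ⟨i0, by rw [hI]; exact Finset.mem_filter.mpr ⟨Finset.mem_univ _, hmem⟩, ?_⟩
    apply pos_of' t p (M : ℤ)
      (fun i => (r i : ℤ) + if i = i0 then -(1 + l i0) else 0)
      (Int.natCast_nonneg _)
      (fun i => by
        have h0 : (0:ℤ) ≤ (r i : ℤ) := Int.natCast_nonneg _
        split
        · rename_i h; subst h; linarith
        · linarith)
    rw [hzdec, sum_add_ite]
    module
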